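/- Let p be a prime with p ≡ 3 (mod 8). Then the equation x² - p·y² = -2 has a solution in positive integers x, y. -/

import Mathlib

private lemma odd_sq_mod8 (u : ℤ) (h : Odd u) : u ^ 2 % 8 = 1 := by
  obtain ⟨k, rfl⟩ := h
  obtain ⟨m, hm⟩ : Even (k * (k + 1)) := Int.even_mul_succ_self k
  have h2 : (2 * k + 1) ^ 2 = 8 * m + 1 := by
    have h3 : k * (k + 1) = m + m := hm
    nlinarith [h3]
  omega

private lemma sq_mod4 (u : ℤ) : u ^ 2 % 4 = 0 ∨ u ^ 2 % 4 = 1 := by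
  rcases Int.even_or_odd u with ⟨k, rfl⟩ | ⟨k, rfl⟩
  · left
    have : (k + k) ^ 2 = 4 * k ^ 2 := by ring
    omega
  · right
    have : (2 * k + 1) ^ 2 = 4 * (k ^ 2 + k) + 1 := by ring
    omega

/-- coprime split: if m * n = p * b², p ∣ n, m,n > 0 coprime, then m = u², n = p v². -/
private lemma split (p : ℕ) (hpZ : Prime (p : ℤ)) (hp0 : (0 : ℤ) < p) (m n b : ℤ)
    (hm : 0 < m) (hn : 0 < n)
    (hco : IsCoprime m n) (heq : m * n = (p : ℤ) * b ^ 2) (hdvd : (p : ℤ) ∣ n) :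
    ∃ u v : ℤ, 0 ≤ u ∧ 0 ≤ v ∧ m = u ^ 2 ∧ n = (p : ℤ) * v ^ 2 := by
  obtain ⟨c, rfl⟩ := hdvd
  have hc0 : 0 < c := by nlinarith [hn, hp0]
  have hmc : m * c = b ^ 2 := by
    have h' : (p : ℤ) * (m * c) = (p : ℤ) * b ^ 2 := by linear_combination heq
    exact mul_left_cancel₀ (ne_of_gt hp0) h'
  have hcoc : IsCoprime m c := hco.of_isCoprime_of_dvd_right ⟨p, mul_comm _ _⟩
  obtain ⟨u, hu⟩ := Int.sq_of_isCoprime hcoc hmc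
  obtain ⟨v, hv⟩ := Int.sq_of_isCoprime hcoc.symm (by linarith [hmc, mul_comm m c] : c * m = b ^ 2)
  have hu' : m = u ^ 2 := by
    rcases hu with h | h
    · exact h
    · exfalso; nlinarith [sq_nonneg u, hm, h]
  have hv' : c = v ^ 2 := by
    rcases hv with h | h
    · exact h
    · exfalso; nlinarith [sq_nonneg v, hc0, h]
  exact ⟨|u|, |v|, abs_nonneg u, abs_nonneg v, by rw [hu', sq_abs], by rw [hv', sq_abs]⟩

private lemma descent (p : ℕ) (hp : p.Prime) (h8 : p % 8 = 3) :
    ∀ n : ℕ, ∀ a b : ℤ, a.natAbs ≤ n → 0 < a → 0 < b → a ^ 2 - (p : ℤ) * b ^ 2 = 1 →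
    ∃ x y : ℤ, 0 < x ∧ 0 < y ∧ x ^ 2 - (p : ℤ) * y ^ 2 = -2 := by
  have hpZ : Prime (p : ℤ) := Nat.prime_iff_prime_int.mp hp
  have hp0 : (0 : ℤ) < p := by
    have := hp.pos; omega
  have hp3 : (3 : ℤ) ≤ p := by omega
  have hpm8 : (p : ℤ) % 8 = 3 := by omega
  intro n
  induction n with
  | zero => intro a b ha ha0 _ _; exfalso; omega
  | succ n ih =>
    intro a b han ha0 hb0 heq
    have ha2 : 2 ≤ a := by
      have hb1 : 1 ≤ b := by omega
      have hb2 : 1 ≤ b ^ 2 := by nlinarith [hb1]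
      have hpb : 3 ≤ (p : ℤ) * b ^ 2 := by nlinarith [hp3, hb2]
      nlinarith [ha0, hpb, heq]
    rcases Int.even_or_odd a with haev | haodd
    · -- a even
      obtain ⟨k, hk⟩ := haev
      subst hk
      have hco : IsCoprime (k + k - 1) (k + k + 1) := ⟨k, -(k - 1), by ring⟩
      have hprod : (k + k - 1) * (k + k + 1) = (p : ℤ) * b ^ 2 := by linear_combination heq
      have hdvd : (p : ℤ) ∣ (k + k - 1) ∨ (p : ℤ) ∣ (k + k + 1) :=
        hpZ.dvd_mul.mp ⟨b ^ 2, hprod⟩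
      rcases hdvd with hd | hd
      · -- p ∣ a - 1 : leads to u² - p v² = 2, impossible mod 8
        exfalso
        obtain ⟨u, v, hu0, hv0, h1, h2⟩ :=
          split p hpZ hp0 (k + k + 1) (k + k - 1) b (by linarith) (by linarith) hco.symm
            (by linear_combination hprod) hd
        have hkey : u ^ 2 - (p : ℤ) * v ^ 2 = 2 := by linarith [h1, h2]
        have huodd : Odd u := by
          rcases Int.even_or_odd u with ⟨j, hj⟩ | ho
          · exfalso
            have h3 : k + k + 1 = 4 * j ^ 2 := by rw [h1, hj]; ring
            generalize j ^ 2 = J at h3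
            omega
          · exact ho
        have hvodd : Odd v := by
          rcases Int.even_or_odd v with ⟨j, hj⟩ | ho
          · exfalso
            have h3 : k + k - 1 = 4 * ((p : ℤ) * j ^ 2) := by rw [h2, hj]; ring
            generalize (p : ℤ) * j ^ 2 = J at h3
            omega
          · exact ho
        have e1 := odd_sq_mod8 u huodd
        have e2 := odd_sq_mod8 v hvodd
        have e3 : ((p : ℤ) * v ^ 2) % 8 = 3 := by
          rw [Int.mul_emod, hpm8, e2]; norm_num
        have e4 : u ^ 2 = (p : ℤ) * v ^ 2 + 2 := by linarith [hkey]
        generalize hB : (p : ℤ) * v ^ 2 = B at e3 e4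
        generalize hA : u ^ 2 = A at e1 e4
        omega
      · -- p ∣ a + 1 : gives u² - p v² = -2, done
        obtain ⟨u, v, hu0, hv0, h1, h2⟩ :=
          split p hpZ hp0 (k + k - 1) (k + k + 1) b (by linarith) (by linarith) hco hprod hd
        have hune : u ≠ 0 := by
          rintro rfl
          simp at h1
          omega
        have hvne : v ≠ 0 := by
          rintro rfl
          simp at h2
          omega
        exact ⟨u, v, lt_of_le_of_ne hu0 (Ne.symm hune), lt_of_le_of_ne hv0 (Ne.symm hvne),
          by linarith [h1, h2]⟩
    · -- a odd
      obtain ⟨s, hs⟩ := haodd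
      subst hs
      have hbev : Even b := by
        rcases Int.even_or_odd b with hbe | hbo
        · exact hbe
        · exfalso
          have e2 := odd_sq_mod8 b hbo
          have e1 := odd_sq_mod8 (2 * s + 1) ⟨s, rfl⟩
          have e3 : ((p : ℤ) * b ^ 2) % 8 = 3 := by rw [Int.mul_emod, hpm8, e2]; norm_num
          have e4 : (2 * s + 1) ^ 2 = (p : ℤ) * b ^ 2 + 1 := by linarith [heq]
          generalize hB : (p : ℤ) * b ^ 2 = B at e3 e4
          generalize hA : (2 * s + 1) ^ 2 = A at e1 e4
          omega
      obtain ⟨c, hc⟩ := hbev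
      subst hc
      have hs1 : 1 ≤ s := by omega
      have hc0 : 0 < c := by
        rcases lt_trichotomy c 0 with h | h | h
        · exfalso; omega
        · exfalso; rw [h] at heq; nlinarith [heq, hs1]
        · exact h
      have hprod : s * (s + 1) = (p : ℤ) * c ^ 2 := by
        have h4 : 4 * (s * (s + 1)) = 4 * ((p : ℤ) * c ^ 2) := by linear_combination heq
        exact mul_left_cancel₀ (by norm_num : (4 : ℤ) ≠ 0) h4
      have hco : IsCoprime s (s + 1) := ⟨-1, 1, by ring⟩
      have hdvd : (p : ℤ) ∣ s ∨ (p : ℤ) ∣ (s + 1) :=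
        hpZ.dvd_mul.mp ⟨c ^ 2, hprod⟩
      rcases hdvd with hd | hd
      · -- p ∣ s : smaller Pell solution v² - p u² = 1
        obtain ⟨v, u, hv0, hu0, h1, h2⟩ :=
          split p hpZ hp0 (s + 1) s c (by linarith) (by linarith) hco.symm
            (by linear_combination hprod) hd
        have hnew : v ^ 2 - (p : ℤ) * u ^ 2 = 1 := by linarith [h1, h2]
        have hune : u ≠ 0 := by
          rintro rfl
          simp at h2
          omega
        have hvne : v ≠ 0 := by
          rintro rfl
          simp at h1
          omega
        have hu1 : 0 < u := lt_of_le_of_ne hu0 (Ne.symm hune)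
        have hv1 : 0 < v := lt_of_le_of_ne hv0 (Ne.symm hvne)
        have hvlt : v < 2 * s + 1 := by nlinarith [h1, hs1, hv1, sq_nonneg (v - 1)]
        exact ih v u (by omega) hv1 hu1 hnew
      · -- p ∣ s + 1 : u² - p v² = -1, impossible mod 4
        exfalso
        obtain ⟨u, v, hu0, hv0, h1, h2⟩ :=
          split p hpZ hp0 s (s + 1) c (by linarith) (by linarith) hco hprod hd
        have hkey : u ^ 2 = (p : ℤ) * v ^ 2 - 1 := by linarith [h1, h2]
        have hpm4 : (p : ℤ) % 4 = 3 := by omega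
        have e1 := sq_mod4 u
        have e2 := sq_mod4 v
        have e3 : ((p : ℤ) * v ^ 2) % 4 = ((p : ℤ) % 4 * (v ^ 2 % 4)) % 4 := Int.mul_emod _ _ _
        rw [hpm4] at e3
        rcases e2 with h | h <;> rw [h] at e3 <;> norm_num at e3 <;>
          · generalize hB : (p : ℤ) * v ^ 2 = B at e3 hkey
            generalize hA : u ^ 2 = A at e1 hkey
            omega

theorem stmt_0 (p : ℕ) (hp : p.Prime) (h8 : p % 8 = 3) :
    ∃ x y : ℤ, 0 < x ∧ 0 < y ∧ x ^ 2 - (p : ℤ) * y ^ 2 = -2 := by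
  have hpZ : Prime (p : ℤ) := Nat.prime_iff_prime_int.mp hp
  have hp0 : (0 : ℤ) < p := by
    have := hp.pos; omega
  obtain ⟨a, b, heq, hb⟩ := Pell.exists_of_not_isSquare hp0 hpZ.not_isSquare
  have ha0 : a ≠ 0 := by
    intro h
    rw [h] at heq
    nlinarith [sq_nonneg b, hp0, heq]
  have h1 : 0 < |a| := abs_pos.mpr ha0
  have h2 : 0 < |b| := abs_pos.mpr hb
  exact descent p hp h8 (|a|).natAbs |a| |b| le_rfl h1 h2
    (by rw [sq_abs, sq_abs]; exact heq)
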